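/- arXiv:2210.05734 — 4 statements merged into one kernel-verified Lean document; each statement's English description precedes it below -/
import Mathlib

section
/- The solution δ of the undamped equation δ'' = ε + Kδ² with δ(0) = δ'(0) = 0 and ε, K > 0 is strictly increasing on (0, T) for any T in its interval of existence, and blows up in finite time. -/
open Real Set

private lemma mono_aux {a : ℝ} {f f' : ℝ → ℝ}
    (hf : ∀ x ∈ Set.Ici a, HasDerivAt f (f' x) x)
    (h' : ∀ x ∈ Set.Ioi a, 0 ≤ f' x) : MonotoneOn f (Set.Ici a) := by
  apply monotoneOn_of_deriv_nonneg (convex_Ici a)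
    (fun x hx => (hf x hx).continuousAt.continuousWithinAt)
  · intro x hx
    rw [interior_Ici] at hx
    exact (hf x (Set.mem_Ici.mpr (Set.mem_Ioi.mp hx).le)).differentiableAt.differentiableWithinAt
  · intro x hx
    rw [interior_Ici] at hx
    rw [(hf x (Set.mem_Ici.mpr (Set.mem_Ioi.mp hx).le)).deriv]
    exact h' x hx

private lemma anti_aux {a : ℝ} {f f' : ℝ → ℝ}
    (hf : ∀ x ∈ Set.Ici a, HasDerivAt f (f' x) x)
    (h' : ∀ x ∈ Set.Ioi a, f' x ≤ 0) : AntitoneOn f (Set.Ici a) := by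
  apply antitoneOn_of_deriv_nonpos (convex_Ici a)
    (fun x hx => (hf x hx).continuousAt.continuousWithinAt)
  · intro x hx
    rw [interior_Ici] at hx
    exact (hf x (Set.mem_Ici.mpr (Set.mem_Ioi.mp hx).le)).differentiableAt.differentiableWithinAt
  · intro x hx
    rw [interior_Ici] at hx
    rw [(hf x (Set.mem_Ici.mpr (Set.mem_Ioi.mp hx).le)).deriv]
    exact h' x hx

theorem stmt_4 (K ε : ℝ) (hK : 0 < K) (hε : 0 < ε) :
    (∀ (δ δ' : ℝ → ℝ) (T : ℝ), 0 < T →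
      δ 0 = 0 → δ' 0 = 0 →
      (∀ τ ∈ Set.Ico (0 : ℝ) T, HasDerivAt δ (δ' τ) τ) →
      (∀ τ ∈ Set.Ico (0 : ℝ) T, HasDerivAt δ' (ε + K * δ τ ^ 2) τ) →
      StrictMonoOn δ (Set.Ioo 0 T)) ∧
    (∀ (δ δ' : ℝ → ℝ),
      δ 0 = 0 → δ' 0 = 0 →
      ¬ ((∀ τ ∈ Set.Ici (0 : ℝ), HasDerivAt δ (δ' τ) τ) ∧
         (∀ τ ∈ Set.Ici (0 : ℝ), HasDerivAt δ' (ε + K * δ τ ^ 2) τ))) := by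
  constructor
  · intro δ δ' T hT h0 h0' hd hd'
    have hδ'mono : StrictMonoOn δ' (Set.Ico 0 T) := by
      apply strictMonoOn_of_deriv_pos (convex_Ico 0 T)
      · exact fun x hx => (hd' x hx).continuousAt.continuousWithinAt
      · intro x hx
        rw [interior_Ico] at hx
        rw [(hd' x (Ioo_subset_Ico_self hx)).deriv]
        nlinarith [sq_nonneg (δ x)]
    have hδ'pos : ∀ τ ∈ Set.Ioo (0:ℝ) T, 0 < δ' τ := by
      intro τ hτ
      have := hδ'mono ⟨le_refl 0, hT⟩ ⟨hτ.1.le, hτ.2⟩ hτ.1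
      rwa [h0'] at this
    apply strictMonoOn_of_deriv_pos (convex_Ioo 0 T)
    · exact fun x hx => (hd x ⟨hx.1.le, hx.2⟩).continuousAt.continuousWithinAt
    · intro x hx
      rw [interior_Ioo] at hx
      rw [(hd x ⟨hx.1.le, hx.2⟩).deriv]
      exact hδ'pos x hx
  · rintro δ δ' h0 h0' ⟨hd, hd'⟩
    -- δ' t ≥ ε t for t ≥ 0
    have hA : ∀ t ∈ Set.Ici (0:ℝ), ε * t ≤ δ' t := by
      have hm : MonotoneOn (fun t => δ' t - ε * t) (Set.Ici 0) := by
        apply mono_aux (f' := fun t => (ε + K * δ t ^ 2) - ε * 1)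
        · exact fun x hx => (hd' x hx).sub ((hasDerivAt_id x).const_mul ε)
        · intro x _; nlinarith [sq_nonneg (δ x)]
      intro t ht
      have := hm Set.self_mem_Ici ht ht
      simp only [h0', mul_zero, sub_zero] at this
      linarith
    -- δ t ≥ ε t² / 2 for t ≥ 0
    have hB : ∀ t ∈ Set.Ici (0:ℝ), ε * t ^ 2 / 2 ≤ δ t := by
      have hm : MonotoneOn (fun t => δ t - ε * t ^ 2 / 2) (Set.Ici 0) := by
        apply mono_aux (f' := fun t => δ' t - ε * ((2:ℕ) * t ^ 1) / 2)
        · exact fun x hx => (hd x hx).sub (((hasDerivAt_pow 2 x).const_mul ε).div_const 2)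
        · intro x hx
          have := hA x (Set.mem_Ici.mpr (Set.mem_Ioi.mp hx).le)
          push_cast
          nlinarith
      intro t ht
      have := hm Set.self_mem_Ici ht ht
      simp [h0] at this
      linarith
    have hδnn : ∀ t ∈ Set.Ici (0:ℝ), 0 ≤ δ t := fun t ht => by
      have := hB t ht; nlinarith [sq_nonneg t]
    -- energy conservation : E = 0 on [0,∞)
    set E : ℝ → ℝ := fun t => δ' t ^ 2 - 2 * ε * δ t - 2 * K / 3 * δ t ^ 3 with hE
    have hEderiv : ∀ t ∈ Set.Ici (0:ℝ), HasDerivAt E 0 t := by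
      intro t ht
      have h1 := (((hd' t ht).pow 2).sub ((hd t ht).const_mul (2 * ε))).sub
        (((hd t ht).pow 3).const_mul (2 * K / 3))
      refine (h1.congr_deriv ?_).congr_of_eventuallyEq (Filter.Eventually.of_forall fun y => rfl)
      push_cast
      ring
    have hEconst : ∀ t ∈ Set.Ici (0:ℝ), E t = 0 := by
      have hm : MonotoneOn E (Set.Ici 0) :=
        mono_aux (f' := fun _ => 0) hEderiv (fun x _ => le_refl 0)
      have ha : AntitoneOn E (Set.Ici 0) :=
        anti_aux (f' := fun _ => 0) hEderiv (fun x _ => le_refl 0)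
      intro t ht
      have hE0 : E 0 = 0 := by simp [hE, h0, h0']
      have h1 := hm Set.self_mem_Ici ht ht
      have h2 := ha Set.self_mem_Ici ht ht
      linarith
    -- δ' t ≥ √(2K/3) * (√(δ t))³
    have hC : ∀ t ∈ Set.Ici (0:ℝ), Real.sqrt (2 * K / 3) * Real.sqrt (δ t) ^ 3 ≤ δ' t := by
      intro t ht
      have hEt := hEconst t ht
      have hδn := hδnn t ht
      have hδ'n : 0 ≤ δ' t := le_trans (by nlinarith [mem_Ici.mp ht]) (hA t ht)
      have hsq : (Real.sqrt (2 * K / 3) * Real.sqrt (δ t) ^ 3) ^ 2 = 2 * K / 3 * δ t ^ 3 := by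
        rw [mul_pow, ← pow_mul, sq_sqrt (by positivity : (0:ℝ) ≤ 2 * K / 3),
          show (3 * 2) = 2 * 3 by ring, pow_mul, sq_sqrt hδn]
      have h2 : (Real.sqrt (2 * K / 3) * Real.sqrt (δ t) ^ 3) ^ 2 ≤ δ' t ^ 2 := by
        rw [hsq]
        simp only [hE] at hEt
        nlinarith
      have h3 := Real.sqrt_le_sqrt h2
      rwa [Real.sqrt_sq (by positivity), Real.sqrt_sq hδ'n] at h3
    -- final contradiction via g t = 1/√(δ t) + c t
    set c : ℝ := Real.sqrt (2 * K / 3) / 2 with hc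
    have hcpos : 0 < c := by
      have : 0 < Real.sqrt (2 * K / 3) := Real.sqrt_pos.mpr (by positivity)
      positivity
    have hδpos : ∀ t ∈ Set.Ici (1:ℝ), 0 < δ t := by
      intro t ht
      have h1 : (0:ℝ) ≤ t := le_trans zero_le_one ht
      have hB1 := hB t h1
      have ht1 : (1:ℝ) ≤ t := ht
      nlinarith [mul_nonneg hε.le (mul_nonneg (sub_nonneg.mpr ht1) (by linarith : (0:ℝ) ≤ t + 1))]
    set g : ℝ → ℝ := fun t => (Real.sqrt (δ t))⁻¹ + c * t with hg
    have hganti : AntitoneOn g (Set.Ici 1) := by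
      apply anti_aux (f' := fun t => -(1 / (2 * Real.sqrt (δ t)) * δ' t) / Real.sqrt (δ t) ^ 2 + c * 1)
      · intro t ht
        have h1 : (0:ℝ) ≤ t := le_trans zero_le_one ht
        have hpos := hδpos t ht
        have hsne : Real.sqrt (δ t) ≠ 0 := ne_of_gt (Real.sqrt_pos.mpr hpos)
        exact (((Real.hasDerivAt_sqrt (ne_of_gt hpos)).comp t (hd t h1)).inv hsne).add
          ((hasDerivAt_id t).const_mul c)
      · intro x hx
        have h1 : (0:ℝ) ≤ x := le_trans zero_le_one hx.le
        have hpos := hδpos x (Set.mem_Ici.mpr (Set.mem_Ioi.mp hx).le)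
        have hspos : 0 < Real.sqrt (δ x) := Real.sqrt_pos.mpr hpos
        have hC' := hC x h1
        have key : 2 * c * Real.sqrt (δ x) ^ 3 ≤ δ' x := by
          rw [hc, show 2 * (Real.sqrt (2 * K / 3) / 2) = Real.sqrt (2 * K / 3) by ring]
          exact hC'
        rw [mul_one, div_add' _ _ _ (by positivity)]
        have hexp : 1 / (2 * Real.sqrt (δ x)) * δ' x ≥ c * Real.sqrt (δ x) ^ 2 := by
          rw [ge_iff_le, one_div, ← div_eq_inv_mul, le_div_iff₀ (by positivity)]
          nlinarith
        apply div_nonpos_of_nonpos_of_nonneg _ (sq_nonneg _)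
        linarith
    -- pick large t
    set t₀ : ℝ := 1 + g 1 / c with ht₀
    have hg1pos : 0 < g 1 := by
      have hpos := hδpos 1 Set.self_mem_Ici
      have hr : g 1 = (Real.sqrt (δ 1))⁻¹ + c * 1 := rfl
      rw [hr]
      positivity
    have ht₀ge : (1:ℝ) ≤ t₀ := by
      have h2 : 0 ≤ g 1 / c := le_of_lt (div_pos hg1pos hcpos)
      rw [ht₀]
      linarith
    have h1 := hganti Set.self_mem_Ici ht₀ge ht₀ge
    have hct₀ : c * t₀ = c + g 1 := by
      rw [ht₀, mul_add, mul_one, mul_div_cancel₀ _ (ne_of_gt hcpos)]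
    have hinvpos : 0 < (Real.sqrt (δ t₀))⁻¹ := by
      have := hδpos t₀ ht₀ge
      positivity
    have hgt₀ : g t₀ = (Real.sqrt (δ t₀))⁻¹ + c * t₀ := rfl
    rw [hgt₀, hct₀] at h1
    linarith
end

section
/- Let z₁ ≈ 2.3381 denote the negated largest (i.e., smallest in absolute value) zero of the Airy function Ai, so Ai(−z₁) = 0 and Ai(−z) > 0 for 0 ≤ z < z₁. Then the solution δ̄(τ̄) = K^{−2/3}c^{1/3}ν^{1/3}·Ai'(−z)/Ai(−z) of c·δ̄' = ντ̄ + Kδ̄² blows up to +∞ as τ̄ → τ̄∞⁻ with τ̄∞ = z₁·(Kν/c²)^{−1/3}; in particular the delay time scales as ν^{−1/3}. -/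
open Real Set Filter Topology

theorem stmt_11 (c K ν : ℝ) (hc : 0 < c) (hK : 0 < K) (hν : 0 < ν)
    (Ai dAi : ℝ → ℝ)
    (hAi : ∀ x, HasDerivAt Ai (dAi x) x)
    (hAi' : ∀ x, HasDerivAt dAi (x * Ai x) x)
    (z₁ : ℝ) (hz₁pos : 0 < z₁) (hz₁ : Ai (-z₁) = 0)
    (hpos : ∀ z : ℝ, 0 ≤ z → z < z₁ → 0 < Ai (-z))
    (hz₁approx : |z₁ - 2.3381| < 0.001)
    (z δ : ℝ → ℝ)
    (hz : z = fun τ => (K * ν / c ^ 2) ^ ((1 : ℝ) / 3) * τ)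
    (hδ : δ = fun τ =>
      K ^ (-(2 : ℝ) / 3) * c ^ ((1 : ℝ) / 3) * ν ^ ((1 : ℝ) / 3) *
        (dAi (-(z τ)) / Ai (-(z τ))))
    (τinf : ℝ) (hτ : τinf = z₁ * (K * ν / c ^ 2) ^ (-(1 : ℝ) / 3)) :
    (∀ τ ∈ Set.Ico (0 : ℝ) τinf, HasDerivAt δ ((ν * τ + K * δ τ ^ 2) / c) τ) ∧
    Filter.Tendsto δ (nhdsWithin τinf (Set.Iio τinf)) Filter.atTop := by
  set a : ℝ := (K * ν / c ^ 2) ^ ((1 : ℝ) / 3) with hadef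
  have hbase : (0:ℝ) < K * ν / c ^ 2 := by positivity
  have ha : 0 < a := Real.rpow_pos_of_pos hbase _
  have ha3 : a ^ 3 = K * ν / c ^ 2 := by
    rw [hadef, ← Real.rpow_natCast (((K * ν / c ^ 2)) ^ ((1:ℝ)/3)) 3,
      ← Real.rpow_mul hbase.le]
    norm_num
  have hν' : ν = a ^ 3 * c ^ 2 / K := by
    field_simp [ha3]
    rw [ha3, div_mul_cancel₀ _ (by positivity)]; ring
  -- constant identity
  have hC : K ^ (-(2 : ℝ) / 3) * c ^ ((1 : ℝ) / 3) * ν ^ ((1 : ℝ) / 3) = c * a / K := by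
    have h1 : a = K ^ ((1:ℝ)/3) * ν ^ ((1:ℝ)/3) / c ^ ((2:ℝ)/3) := by
      rw [hadef, Real.div_rpow (by positivity) (by positivity),
        Real.mul_rpow hK.le hν.le, ← Real.rpow_natCast c 2, ← Real.rpow_mul hc.le]
      norm_num
    have h2 : K ^ (-(2:ℝ)/3) * K = K ^ ((1:ℝ)/3) := by
      nth_rewrite 2 [← Real.rpow_one K]
      rw [← Real.rpow_add hK]
      norm_num
    have h3 : c ^ ((1:ℝ)/3) * c ^ ((2:ℝ)/3) = c := by
      rw [← Real.rpow_add hc]; norm_num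
    have hc23 : 0 < c ^ ((2:ℝ)/3) := Real.rpow_pos_of_pos hc _
    rw [h1]
    field_simp
    rw [neg_div] at h2
    linear_combination (c ^ ((1:ℝ)/3) * c ^ ((2:ℝ)/3)) * h2 +
      K ^ ((1:ℝ)/3) * h3
  have hτinf : τinf = z₁ / a := by
    rw [hτ, hadef]
    rw [show (-(1:ℝ)/3) = -((1:ℝ)/3) by norm_num, Real.rpow_neg hbase.le]
    ring
  have hτpos : 0 < τinf := by rw [hτinf]; positivity
  have haτinf : a * τinf = z₁ := by
    rw [hτinf]; field_simp
  -- inner function derivative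
  have hi : ∀ τ : ℝ, HasDerivAt (fun t : ℝ => -(a * t)) (-a) τ := by
    intro τ
    have := ((hasDerivAt_id τ).const_mul a).neg
    simp only [mul_one] at this
    exact this
  have hg : ∀ τ : ℝ, HasDerivAt (fun t => Ai (-(a * t))) (dAi (-(a * τ)) * -a) τ :=
    fun τ => (hAi _).comp τ (hi τ)
  have hf : ∀ τ : ℝ, HasDerivAt (fun t => dAi (-(a * t)))
      ((-(a * τ) * Ai (-(a * τ))) * -a) τ :=
    fun τ => (hAi' _).comp τ (hi τ)
  subst hz hδ
  constructor
  · intro τ hτmem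
    obtain ⟨hτ0, hτlt⟩ := hτmem
    have hzlt : a * τ < z₁ := by
      rw [hτinf] at hτlt
      calc a * τ < a * (z₁ / a) := by exact (mul_lt_mul_iff_right₀ ha).mpr hτlt
        _ = z₁ := by field_simp
    have hg0 : 0 < Ai (-(a * τ)) := hpos (a * τ) (by positivity) hzlt
    have hquot := ((hf τ).div (hg τ) hg0.ne').const_mul
      (K ^ (-(2 : ℝ) / 3) * c ^ ((1 : ℝ) / 3) * ν ^ ((1 : ℝ) / 3))
    refine hquot.congr_deriv ?_
    rw [hC, hν']
    field_simp
    ring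
  · -- blow-up
    have hd1 : 0 < dAi (-z₁) := by
      by_contra hcon
      push_neg at hcon
      -- p s = -dAi (-s) is antitone on [0, z₁]
      set p : ℝ → ℝ := fun s => -dAi (-s) with hpdef
      have hp : ∀ s : ℝ, HasDerivAt p (-(s * Ai (-s))) s := by
        intro s
        have hinner : HasDerivAt (fun t : ℝ => -t) (-1 : ℝ) s := by
          exact (hasDerivAt_id s).neg
        have := ((hAi' (-s)).comp s hinner).neg
        simp at this
        exact this
      have hpanti : AntitoneOn p (Icc 0 z₁) := by
        apply antitoneOn_of_deriv_nonpos (convex_Icc 0 z₁)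
        · exact fun s _ => (hp s).continuousAt.continuousWithinAt
        · exact fun s _ => (hp s).differentiableAt.differentiableWithinAt
        · intro s hs
          rw [interior_Icc] at hs
          rw [(hp s).deriv]
          have := hpos s hs.1.le hs.2
          nlinarith [hs.1]
      have hds : ∀ s : ℝ, HasDerivAt (fun t => Ai (-t)) (p s) s := by
        intro s
        have hinner : HasDerivAt (fun t : ℝ => -t) (-1 : ℝ) s := by
          exact (hasDerivAt_id s).neg
        have := (hAi (-s)).comp s hinner
        simp [hpdef] at this
        exact this
      have hmono : MonotoneOn (fun s => Ai (-s)) (Icc 0 z₁) := by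
        apply monotoneOn_of_deriv_nonneg (convex_Icc 0 z₁)
        · exact fun s _ => (hds s).continuousAt.continuousWithinAt
        · exact fun s _ => (hds s).differentiableAt.differentiableWithinAt
        · intro s hs
          rw [interior_Icc] at hs
          rw [(hds s).deriv]
          have h1 : p z₁ ≤ p s := hpanti ⟨hs.1.le, hs.2.le⟩ (by constructor <;> linarith) hs.2.le
          have h2 : (0:ℝ) ≤ p z₁ := by simp [hpdef]; linarith
          linarith
      have := hmono (Set.mem_Icc.mpr ⟨le_rfl, hz₁pos.le⟩) (Set.mem_Icc.mpr ⟨hz₁pos.le, le_rfl⟩) hz₁pos.le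
      simp only [neg_zero] at this
      have h0 : 0 < Ai (-(0:ℝ)) := hpos 0 le_rfl hz₁pos
      simp only [neg_zero] at h0
      rw [hz₁] at this
      linarith
    -- continuity limits
    have hcont : Tendsto (fun τ => -(a * τ)) (nhdsWithin τinf (Set.Iio τinf)) (𝓝 (-z₁)) := by
      have : Continuous (fun τ : ℝ => -(a * τ)) := (continuous_const.mul continuous_id).neg
      have := this.tendsto τinf
      rw [haτinf] at this
      exact this.mono_left nhdsWithin_le_nhds
    have hfT : Tendsto (fun τ => dAi (-(a * τ))) (nhdsWithin τinf (Set.Iio τinf)) (𝓝 (dAi (-z₁))) :=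
      (hAi' (-z₁)).continuousAt.tendsto.comp hcont
    have hgT : Tendsto (fun τ => Ai (-(a * τ))) (nhdsWithin τinf (Set.Iio τinf)) (𝓝[>] 0) := by
      rw [tendsto_nhdsWithin_iff]
      constructor
      · have := (hAi (-z₁)).continuousAt.tendsto.comp hcont
        rwa [hz₁] at this
      · filter_upwards [Ioo_mem_nhdsLT_of_mem (⟨hτpos, le_rfl⟩ : τinf ∈ Ioc 0 τinf)] with τ hτm
        have hzlt : a * τ < z₁ := by
          rw [hτinf] at hτm
          calc a * τ < a * (z₁ / a) := (mul_lt_mul_iff_right₀ ha).mpr hτm.2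
            _ = z₁ := by field_simp
        exact hpos (a * τ) (mul_nonneg ha.le hτm.1.le) hzlt
    have hinv : Tendsto (fun τ => (Ai (-(a * τ)))⁻¹) (nhdsWithin τinf (Set.Iio τinf)) atTop :=
      hgT.inv_tendsto_nhdsGT_zero
    have hratio : Tendsto (fun τ => dAi (-(a * τ)) * (Ai (-(a * τ)))⁻¹)
        (nhdsWithin τinf (Set.Iio τinf)) atTop :=
      hfT.pos_mul_atTop hd1 hinv
    have hCpos : 0 < K ^ (-(2 : ℝ) / 3) * c ^ ((1 : ℝ) / 3) * ν ^ ((1 : ℝ) / 3) := by positivity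
    have := hratio.const_mul_atTop hCpos
    simpa [div_eq_mul_inv] using this
end

section
/- For ν, K > 0, the time for the Boutroux variable to blow up, X∞ = (1/√2)·(3/K)^{1/4}·ν^{−1/4}·F(π, 1/√2), when transformed back via X = (4/5)·τ̄^{5/4}, yields τ̄∞ = (5X∞/4)^{4/5}, which is proportional to (Kν)^{−1/5}. In particular, the delayed switching time of the undamped arch under a ramp load of rate ν scales as ν^{−1/5}. -/
open Real Set

theorem stmt_14 (K ν : ℝ) (hK : 0 < K) (hν : 0 < ν)
    (F : ℝ → ℝ → ℝ)
    (hF : F = fun φ k => ∫ θ in (0 : ℝ)..φ, 1 / Real.sqrt (1 - k ^ 2 * Real.sin θ ^ 2))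
    (Xinf : ℝ)
    (hX : Xinf = (1 / Real.sqrt 2) * (3 / K) ^ ((1 : ℝ) / 4) * ν ^ (-(1 : ℝ) / 4) *
      F π (1 / Real.sqrt 2))
    (τinf : ℝ) (hτ : τinf = (5 * Xinf / 4) ^ ((4 : ℝ) / 5)) :
    τinf = ((5 / 4) * (1 / Real.sqrt 2) * 3 ^ ((1 : ℝ) / 4) * F π (1 / Real.sqrt 2)) ^ ((4 : ℝ) / 5)
        * (K * ν) ^ (-(1 : ℝ) / 5) := by
  have hFnn : 0 ≤ F π (1 / Real.sqrt 2) := by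
    rw [hF]
    refine intervalIntegral.integral_nonneg pi_pos.le fun θ _ => ?_
    positivity
  set Fv := F π (1 / Real.sqrt 2) with hFv
  have hc : (0:ℝ) ≤ (5 / 4) * (1 / Real.sqrt 2) * 3 ^ ((1 : ℝ) / 4) * Fv := by positivity
  have hKν : (0:ℝ) ≤ K * ν := by positivity
  have key : 5 * Xinf / 4
      = ((5 / 4) * (1 / Real.sqrt 2) * 3 ^ ((1 : ℝ) / 4) * Fv) * (K * ν) ^ (-(1 : ℝ) / 4) := by
    rw [hX, Real.div_rpow (by norm_num) hK.le,
      Real.mul_rpow hK.le hν.le]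
    rw [show (-(1:ℝ)/4) = -(1/4) by norm_num, Real.rpow_neg hK.le, Real.rpow_neg hν.le]
    field_simp
  rw [hτ, key, Real.mul_rpow hc (Real.rpow_nonneg hKν _), ← Real.rpow_mul hKν]
  norm_num
end

section
/- For constants c, K̄, ε̄ > 0, the solution of the reduced multi-mode equation c·δ̄' = ε̄ + K̄·δ̄² with δ̄(0) = 0 blows up at τ∞ = (π/2)·c·K̄^{−1/2}·ε̄^{−1/2}; hence the multi-mode switching time has the same ε^{−1/2} power law as the single-mode case, with K replaced by the projected curvature K̄. -/
open Real Set Filter Topology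

theorem stmt_16 (c Kb εb : ℝ) (hc : 0 < c) (hK : 0 < Kb) (hε : 0 < εb)
    (τinf : ℝ) (hτ : τinf = (π / 2) * c * Kb ^ (-(1 : ℝ) / 2) * εb ^ (-(1 : ℝ) / 2)) :
    ∃ δ : ℝ → ℝ, δ 0 = 0 ∧
      (∀ τ ∈ Set.Ico (0 : ℝ) τinf, HasDerivAt δ ((εb + Kb * δ τ ^ 2) / c) τ) ∧
      Filter.Tendsto δ (nhdsWithin τinf (Set.Iio τinf)) Filter.atTop := by
  set a := Real.sqrt (εb / Kb) with ha_def
  set b := Real.sqrt (εb * Kb) / c with hb_def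
  have hsK : (0:ℝ) < Real.sqrt Kb := Real.sqrt_pos.2 hK
  have hsε : (0:ℝ) < Real.sqrt εb := Real.sqrt_pos.2 hε
  have ha : 0 < a := Real.sqrt_pos.2 (div_pos hε hK)
  have hb : 0 < b := div_pos (Real.sqrt_pos.2 (mul_pos hε hK)) hc
  have hKr : Kb ^ (-(1:ℝ)/2) = (Real.sqrt Kb)⁻¹ := by
    rw [Real.sqrt_eq_rpow, ← Real.rpow_neg hK.le]; norm_num
  have hεr : εb ^ (-(1:ℝ)/2) = (Real.sqrt εb)⁻¹ := by
    rw [Real.sqrt_eq_rpow, ← Real.rpow_neg hε.le]; norm_num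
  have hmul : Real.sqrt (εb * Kb) = Real.sqrt εb * Real.sqrt Kb := Real.sqrt_mul hε.le _
  have hτ' : b * τinf = π / 2 := by
    rw [hτ, hb_def, hKr, hεr, hmul]
    field_simp
  have hasq : a ^ 2 = εb / Kb := Real.sq_sqrt (div_pos hε hK).le
  have key : a * Real.sqrt (εb * Kb) = εb := by
    rw [ha_def, ← Real.sqrt_mul (div_pos hε hK).le,
      show εb / Kb * (εb * Kb) = εb ^ 2 by field_simp, Real.sqrt_sq hε.le]
  have hab : a * b = εb / c := by rw [hb_def, ← mul_div_assoc, key]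
  refine ⟨fun τ => a * Real.tan (b * τ), by simp, ?_, ?_⟩
  · rintro τ ⟨h0, h1⟩
    have hlt : b * τ < π / 2 := by
      rw [← hτ']; exact (mul_lt_mul_iff_right₀ hb).2 h1
    have hcos : Real.cos (b * τ) ≠ 0 := by
      have : 0 < Real.cos (b * τ) :=
        Real.cos_pos_of_mem_Ioo ⟨by nlinarith [Real.pi_pos, mul_nonneg hb.le h0], hlt⟩
      exact this.ne'
    have hd : HasDerivAt (fun τ => a * Real.tan (b * τ))
        (a * ((1 / Real.cos (b * τ) ^ 2) * b)) τ := by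
      simpa using ((Real.hasDerivAt_tan hcos).comp τ ((hasDerivAt_id τ).const_mul b)).const_mul a
    convert hd using 1
    have htan : Real.tan (b * τ) ^ 2 + 1 = 1 / Real.cos (b * τ) ^ 2 := by
      rw [one_div, ← Real.inv_one_add_tan_sq hcos, inv_inv]; ring
    have h1 : Kb * (a * Real.tan (b * τ)) ^ 2 = εb * Real.tan (b * τ) ^ 2 := by
      rw [mul_pow, hasq]; field_simp
    rw [h1, ← htan]
    have : a * ((Real.tan (b*τ)^2 + 1) * b) = (a*b) * (Real.tan (b*τ)^2 + 1) := by ring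
    rw [this, hab]
    field_simp
    ring
  · have h1 : Tendsto (fun τ => b * τ) (𝓝[<] τinf) (𝓝[<] (π/2)) := by
      apply tendsto_nhdsWithin_of_tendsto_nhds_of_eventually_within
      · rw [← hτ']
        exact (tendsto_id.const_mul b).mono_left nhdsWithin_le_nhds
      · filter_upwards [self_mem_nhdsWithin] with x hx
        rw [Set.mem_Iio, ← hτ']
        exact (mul_lt_mul_iff_right₀ hb).2 hx
    exact (Real.tendsto_tan_pi_div_two.comp h1).const_mul_atTop ha
end
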